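/- Let γ₁, γ₂: S¹ → ℝ⁺ with Cahn-Hoffman vectors ξ₁, ξ₂, and let k₁, k₂: S¹ → ℝ be such that γᵢ(n)[(n̂^⊥)ᵀ Z^{(i)}_{kᵢ}(n) n̂^⊥] ≥ γᵢ(n̂)² for all n, n̂ ∈ S¹ and i = 1,2, where Z^{(i)}_{kᵢ}(n) = γᵢ(n)I₂ - ξᵢnᵀ - nξᵢᵀ + kᵢ(n)nnᵀ. Then for γ = γ₁ + γ₂, ξ = ξ₁ + ξ₂, and k = k₁ + k₂, one has γ(n)[(n̂^⊥)ᵀ Z_k(n) n̂^⊥] ≥ γ(n̂)² for all n, n̂ ∈ S¹; hence the minimal stabilizing function for γ satisfies k₀ ≤ k₁ + k₂ (subadditivity). -/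
import Mathlib


open Matrix

/-- Clockwise rotation by π/2. -/
noncomputable def perp (v : Fin 2 → ℝ) : Fin 2 → ℝ := ![v 1, -v 0]

/-- The surface energy matrix Z_k(n) = g I₂ - ξ nᵀ - n ξᵀ + k n nᵀ. -/
noncomputable def Zmat (g : ℝ) (xi nv : Fin 2 → ℝ) (k : ℝ) : Matrix (Fin 2) (Fin 2) ℝ :=
  g • (1 : Matrix (Fin 2) (Fin 2) ℝ) - vecMulVec xi nv - vecMulVec nv xi + k • vecMulVec nv nv

/-- The function F(n, n̂) built from γ and the Cahn-Hoffman vector ξ. -/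
noncomputable def Ffun (γ : (Fin 2 → ℝ) → ℝ) (ξ : (Fin 2 → ℝ) → Fin 2 → ℝ)
    (n m : Fin 2 → ℝ) : ℝ :=
  (γ m ^ 2 - γ n ^ 2 + 2 * γ n * (ξ n ⬝ᵥ perp m) * (n ⬝ᵥ perp m)) /
    (γ n * (n ⬝ᵥ perp m) ^ 2)

/-- The minimal stabilizing function. -/
noncomputable def kmin (γ : (Fin 2 → ℝ) → ℝ) (ξ : (Fin 2 → ℝ) → Fin 2 → ℝ)
    (n : Fin 2 → ℝ) : ℝ :=
  sSup (Ffun γ ξ n '' {m : Fin 2 → ℝ | m ⬝ᵥ m = 1 ∧ 0 ≤ m ⬝ᵥ n})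

/-- Quadratic form of the matrix `Zmat`. -/
lemma quadform (g : ℝ) (xi nv p : Fin 2 → ℝ) (k : ℝ) :
    p ⬝ᵥ (Zmat g xi nv k).mulVec p
      = g * (p ⬝ᵥ p) - 2 * (xi ⬝ᵥ p) * (nv ⬝ᵥ p) + k * (nv ⬝ᵥ p) ^ 2 := by
  simp [Zmat, dotProduct, mulVec, vecMulVec, Matrix.one_apply, Fin.sum_univ_two,
    Matrix.sub_apply, Matrix.add_apply, Matrix.smul_apply]
  ring

lemma perp_dot (m : Fin 2 → ℝ) : perp m ⬝ᵥ perp m = m ⬝ᵥ m := by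
  simp [perp, dotProduct, Fin.sum_univ_two]; ring

/-- Cauchy–Schwarz combination step. -/
lemma cs_key (a₁ a₂ c₁ c₂ Q₁ Q₂ : ℝ) (hc₁ : 0 < c₁) (hc₂ : 0 < c₂)
    (_ha₁ : 0 ≤ a₁) (_ha₂ : 0 ≤ a₂) (h₁ : a₁ ^ 2 ≤ c₁ * Q₁) (h₂ : a₂ ^ 2 ≤ c₂ * Q₂) :
    (a₁ + a₂) ^ 2 ≤ (c₁ + c₂) * (Q₁ + Q₂) := by
  nlinarith [sq_nonneg (c₂ * a₁ - c₁ * a₂), mul_pos hc₁ hc₂, sq_nonneg (a₁ + a₂),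
    mul_le_mul_of_nonneg_left h₁ hc₂.le, mul_le_mul_of_nonneg_left h₂ hc₁.le,
    mul_nonneg _ha₁ _ha₂]

theorem stability_subadditive (γ₁ γ₂ : (Fin 2 → ℝ) → ℝ)
    (ξ₁ ξ₂ : (Fin 2 → ℝ) → Fin 2 → ℝ) (k₁ k₂ : (Fin 2 → ℝ) → ℝ)
    (hpos₁ : ∀ n : Fin 2 → ℝ, n ⬝ᵥ n = 1 → 0 < γ₁ n)
    (hpos₂ : ∀ n : Fin 2 → ℝ, n ⬝ᵥ n = 1 → 0 < γ₂ n)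
    (hEuler₁ : ∀ n : Fin 2 → ℝ, n ⬝ᵥ n = 1 → ξ₁ n ⬝ᵥ n = γ₁ n)
    (hEuler₂ : ∀ n : Fin 2 → ℝ, n ⬝ᵥ n = 1 → ξ₂ n ⬝ᵥ n = γ₂ n)
    (hineq₁ : ∀ n m : Fin 2 → ℝ, n ⬝ᵥ n = 1 → m ⬝ᵥ m = 1 →
      γ₁ m ^ 2 ≤ γ₁ n * (perp m ⬝ᵥ (Zmat (γ₁ n) (ξ₁ n) n (k₁ n)).mulVec (perp m)))
    (hineq₂ : ∀ n m : Fin 2 → ℝ, n ⬝ᵥ n = 1 → m ⬝ᵥ m = 1 →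
      γ₂ m ^ 2 ≤ γ₂ n * (perp m ⬝ᵥ (Zmat (γ₂ n) (ξ₂ n) n (k₂ n)).mulVec (perp m))) :
    (∀ n m : Fin 2 → ℝ, n ⬝ᵥ n = 1 → m ⬝ᵥ m = 1 →
      (γ₁ m + γ₂ m) ^ 2 ≤ (γ₁ n + γ₂ n) *
        (perp m ⬝ᵥ (Zmat (γ₁ n + γ₂ n) (fun i => ξ₁ n i + ξ₂ n i) n
          (k₁ n + k₂ n)).mulVec (perp m))) ∧
    (∀ n : Fin 2 → ℝ, n ⬝ᵥ n = 1 →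
      kmin (fun p => γ₁ p + γ₂ p) (fun p i => ξ₁ p i + ξ₂ p i) n ≤ k₁ n + k₂ n) := by
  have P1 : ∀ n m : Fin 2 → ℝ, n ⬝ᵥ n = 1 → m ⬝ᵥ m = 1 →
      (γ₁ m + γ₂ m) ^ 2 ≤ (γ₁ n + γ₂ n) *
        (perp m ⬝ᵥ (Zmat (γ₁ n + γ₂ n) (fun i => ξ₁ n i + ξ₂ n i) n
          (k₁ n + k₂ n)).mulVec (perp m)) := by
    intro n m hn hm
    have h1 := hineq₁ n m hn hm
    have h2 := hineq₂ n m hn hm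
    rw [quadform] at h1 h2 ⊢
    have hsum : (fun i => ξ₁ n i + ξ₂ n i) ⬝ᵥ perp m
        = ξ₁ n ⬝ᵥ perp m + ξ₂ n ⬝ᵥ perp m := add_dotProduct _ _ _
    rw [hsum]
    have key := cs_key (γ₁ m) (γ₂ m) (γ₁ n) (γ₂ n)
      (γ₁ n * (perp m ⬝ᵥ perp m) - 2 * (ξ₁ n ⬝ᵥ perp m) * (n ⬝ᵥ perp m)
        + k₁ n * (n ⬝ᵥ perp m) ^ 2)
      (γ₂ n * (perp m ⬝ᵥ perp m) - 2 * (ξ₂ n ⬝ᵥ perp m) * (n ⬝ᵥ perp m)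
        + k₂ n * (n ⬝ᵥ perp m) ^ 2)
      (hpos₁ n hn) (hpos₂ n hn) (hpos₁ m hm).le (hpos₂ m hm).le h1 h2
    calc (γ₁ m + γ₂ m) ^ 2 ≤ _ := key
      _ = _ := by ring
  refine ⟨P1, ?_⟩
  intro n hn
  -- first show k₁ n > γ₁ n and k₂ n > γ₂ n by testing at m = (-n₁, n₀)
  have hm' : (![-n 1, n 0] : Fin 2 → ℝ) ⬝ᵥ ![-n 1, n 0] = 1 := by
    simp [dotProduct, Fin.sum_univ_two] at hn ⊢
    linarith [hn]
  have he1 := hEuler₁ n hn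
  have he2 := hEuler₂ n hn
  simp [dotProduct, Fin.sum_univ_two] at he1 he2
  have hn' : n 0 * n 0 + n 1 * n 1 = 1 := by
    simpa [dotProduct, Fin.sum_univ_two] using hn
  have hk : ∀ (γ : (Fin 2 → ℝ) → ℝ) (ξ : (Fin 2 → ℝ) → Fin 2 → ℝ) (k : (Fin 2 → ℝ) → ℝ),
      (∀ p : Fin 2 → ℝ, p ⬝ᵥ p = 1 → 0 < γ p) →
      (ξ n 0 * n 0 + ξ n 1 * n 1 = γ n) →
      (∀ m : Fin 2 → ℝ, m ⬝ᵥ m = 1 →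
        γ m ^ 2 ≤ γ n * (perp m ⬝ᵥ (Zmat (γ n) (ξ n) n (k n)).mulVec (perp m))) →
      γ n < k n := by
    intro γ ξ k hpos heu hineq
    have h := hineq ![-n 1, n 0] hm'
    rw [quadform] at h
    simp [perp, dotProduct, Fin.sum_univ_two] at h
    rw [hn', heu] at h
    have hγn := hpos n hn
    have hγm := hpos ![-n 1, n 0] hm'
    nlinarith [mul_pos hγm hγm, hγn, h]
  have hk1 : γ₁ n < k₁ n := hk γ₁ ξ₁ k₁ hpos₁ he1 (fun m hm => hineq₁ n m hn hm)
  have hk2 : γ₂ n < k₂ n := hk γ₂ ξ₂ k₂ hpos₂ he2 (fun m hm => hineq₂ n m hn hm)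
  have hγ1 := hpos₁ n hn
  have hγ2 := hpos₂ n hn
  -- now bound the supremum
  apply csSup_le
  · exact ⟨_, ⟨n, ⟨hn, by rw [hn]; norm_num⟩, rfl⟩⟩
  · rintro x ⟨m, ⟨hm, -⟩, rfl⟩
    simp only [Ffun]
    by_cases hc : n ⬝ᵥ perp m = 0
    · rw [hc]
      simp
      linarith
    · rw [div_le_iff₀ (by positivity)]
      have key := P1 n m hn hm
      rw [quadform] at key
      have hsum : (fun i => ξ₁ n i + ξ₂ n i) ⬝ᵥ perp m
          = ξ₁ n ⬝ᵥ perp m + ξ₂ n ⬝ᵥ perp m := add_dotProduct _ _ _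
      rw [hsum, perp_dot, hm] at key
      rw [hsum]
      nlinarith [key]
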